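/- Let K_{n_1,…,n_k} be a complete k-partite graph of order n = n_1 + ⋯ + n_k with 2 < k < n (all n_i ≥ 1). Then K_{n_1,…,n_k} has exactly two distinct negative Seidel eigenvalues: −1, with multiplicity exactly n − k, and one further simple eigenvalue λ_n < −1. -/

import Mathlib

set_option maxHeartbeats 1000000
open Polynomial Matrix Finset SimpleGraph

/- The Seidel matrix `S(G) = J - I - 2A(G)` of a simple graph `G`. -/
open scoped Classical in
noncomputable def seidelMatrix {V : Type*} [Fintype V] [DecidableEq V]
    (G : SimpleGraph V) : Matrix V V ℝ :=
  (Matrix.of fun _ _ => (1 : ℝ)) - 1 - 2 • G.adjMatrix ℝ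

open Polynomial Matrix Finset

variable {m : Type*} [Fintype m] [DecidableEq m]

lemma my_charpoly_conj (U D W : Matrix m m ℝ) (h1 : U * W = 1) (h2 : W * U = 1) :
    (U * D * W).charpoly = D.charpoly := by
  have hmap : ∀ (X Y : Matrix m m ℝ), (X * Y).map (C : ℝ →+* ℝ[X]) = X.map C * Y.map C := by
    intro X Y; exact Matrix.map_mul
  have key : charmatrix (U * D * W) = U.map C * charmatrix D * W.map C := by
    unfold charmatrix
    rw [Matrix.mul_sub, Matrix.sub_mul]
    congr 1
    · rw [show (Matrix.scalar m (X : ℝ[X])) = (X : ℝ[X]) • (1 : Matrix m m ℝ[X]) by rw [Matrix.scalar_apply]; ext i j; by_cases h : i = j <;> simp [h, Matrix.diagonal_apply, Matrix.one_apply]]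
      rw [Matrix.mul_smul, Matrix.mul_one, Matrix.smul_mul, ← hmap, h1]
      simp
    · simp only [RingHom.mapMatrix_apply]
      rw [hmap, hmap]
  rw [Matrix.charpoly, key, det_mul, det_mul, Matrix.charpoly, mul_comm, ← mul_assoc, ← det_mul, ← hmap, h2]
  simp

lemma my_charpoly_diagonal (d : m → ℝ) :
    (Matrix.diagonal d).charpoly = ∏ i, (X - C (d i)) := by
  have : charmatrix (Matrix.diagonal d) = Matrix.diagonal (fun i => X - C (d i)) := by
    ext i j
    by_cases h : i = j
    · subst h; simp [charmatrix_apply_eq]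
    · simp [charmatrix_apply_ne _ _ _ h, Matrix.diagonal_apply_ne _ h]
  rw [Matrix.charpoly, this, det_diagonal]

lemma my_charpoly_hermitian (A : Matrix m m ℝ) (hA : A.IsHermitian) :
    A.charpoly = ∏ i, (X - C (hA.eigenvalues i)) := by
  have hst := hA.spectral_theorem
  have h1 : (hA.eigenvectorUnitary : Matrix m m ℝ) * (star (hA.eigenvectorUnitary : Matrix m m ℝ)) = 1 :=
    (Matrix.mem_unitaryGroup_iff).mp (hA.eigenvectorUnitary).2
  have h2 : (star (hA.eigenvectorUnitary : Matrix m m ℝ)) * (hA.eigenvectorUnitary : Matrix m m ℝ) = 1 :=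
    (Matrix.mem_unitaryGroup_iff').mp (hA.eigenvectorUnitary).2
  calc A.charpoly = ((hA.eigenvectorUnitary : Matrix m m ℝ) * Matrix.diagonal (RCLike.ofReal ∘ hA.eigenvalues) * (star (hA.eigenvectorUnitary : Matrix m m ℝ))).charpoly := by conv_lhs => rw [hst, Unitary.conjStarAlgAut_apply]
    _ = (Matrix.diagonal (RCLike.ofReal ∘ hA.eigenvalues)).charpoly := my_charpoly_conj _ _ _ h1 h2
    _ = ∏ i, (X - C (hA.eigenvalues i)) := by rw [my_charpoly_diagonal]; rfl

open Polynomial Matrix Finset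

lemma my_block_det (mm : ℕ) (hm : 1 ≤ mm) (x : ℝ) (hx : x + 1 ≠ 0) :
    det ((x+1) • (1 : Matrix (Fin mm) (Fin mm) ℝ) - 2 • (Matrix.of fun _ _ => (1:ℝ))) =
      (x+1)^(mm-1) * (x+1-2*mm) := by
  have key : (x+1) • (1 : Matrix (Fin mm) (Fin mm) ℝ) - 2 • (Matrix.of fun _ _ => (1:ℝ)) =
      (x+1) • ((1 : Matrix (Fin mm) (Fin mm) ℝ) + replicateCol Unit (fun _ => -2/(x+1)) * replicateRow Unit (fun _ => (1:ℝ))) := by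
    ext i j
    simp only [Matrix.sub_apply, Matrix.smul_apply, Matrix.add_apply, Matrix.one_apply,
      Matrix.of_apply, smul_eq_mul, Matrix.mul_apply, Matrix.replicateCol_apply, Matrix.replicateRow_apply,
      Finset.sum_const, Finset.card_univ, Fintype.card_unit, one_smul]
    by_cases h : i = j <;> simp [h] <;> field_simp <;> ring
  rw [key, det_smul, det_one_add_replicateCol_mul_replicateRow]
  rw [Fintype.card_fin]
  have : ((fun _ => (1:ℝ)) : Fin mm → ℝ) ⬝ᵥ (fun _ => -2/(x+1)) = mm * (-2/(x+1)) := by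
    simp [dotProduct]
  rw [this]
  have hpow : (x+1)^mm = (x+1)^(mm-1) * (x+1) := by
    conv_lhs => rw [show mm = (mm - 1) + 1 from (Nat.succ_pred_eq_of_pos hm).symm]
    ring
  rw [hpow]
  field_simp
  ring

section
variable (k : ℕ) (n : Fin k → ℕ)

abbrev Vt := (i : Fin k) × Fin (n i)

open scoped Classical in
lemma my_det_eval (hn : ∀ i, 1 ≤ n i) (x : ℝ)
    (hx : x + 1 ≠ 0) (hx2 : ∀ i, x + 1 - 2 * n i ≠ 0) :
    det (x • (1 : Matrix (Vt k n) (Vt k n) ℝ)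
        - seidelMatrix (completeMultipartiteGraph fun i => Fin (n i))) =
      (x+1)^((∑ i, n i) - k) * ((∏ i, (x+1-2*(n i : ℝ))) * (1 + ∑ i, (n i : ℝ)/(x+1-2*(n i : ℝ)))) := by
  set Bm : Matrix (Vt k n) (Vt k n) ℝ :=
    blockDiagonal' (fun i => (x+1) • (1 : Matrix (Fin (n i)) (Fin (n i)) ℝ) - 2 • (Matrix.of fun _ _ => (1:ℝ))) with hBm
  -- key decomposition
  have key : x • (1 : Matrix (Vt k n) (Vt k n) ℝ)
      - seidelMatrix (completeMultipartiteGraph fun i => Fin (n i))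
      = Bm + replicateCol Unit (fun _ => (1:ℝ)) * replicateRow Unit (fun _ => (1:ℝ)) := by
    ext ⟨i, a⟩ ⟨j, b⟩
    by_cases h : i = j
    · subst h
      simp only [hBm, Matrix.add_apply, blockDiagonal'_apply_eq, Matrix.sub_apply,
        Matrix.smul_apply, Matrix.one_apply, Matrix.of_apply, smul_eq_mul,
        Matrix.mul_apply, Matrix.replicateCol_apply, Matrix.replicateRow_apply, Finset.sum_const,
        Finset.card_univ, Fintype.card_unit, one_smul, seidelMatrix,
        SimpleGraph.adjMatrix_apply, comap_adj, top_adj, ne_eq, not_true_eq_false]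
      by_cases hab : a = b
      · subst hab; simp; ring
      · have : (⟨i,a⟩ : Vt k n) ≠ ⟨i,b⟩ := by simp [hab]
        simp [hab, Matrix.one_apply_ne this, this]; ring
    · have hne : (⟨i,a⟩ : Vt k n) ≠ ⟨j,b⟩ := by simp [h]
      simp only [hBm, Matrix.add_apply, Matrix.sub_apply, Matrix.smul_apply,
        Matrix.one_apply_ne hne, Matrix.of_apply, smul_eq_mul,
        Matrix.mul_apply, Matrix.replicateCol_apply, Matrix.replicateRow_apply, Finset.sum_const,
        Finset.card_univ, Fintype.card_unit, one_smul, seidelMatrix,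
        SimpleGraph.adjMatrix_apply, comap_adj, top_adj, ne_eq]
      rw [blockDiagonal'_apply_ne _ _ _ h]
      simp [h]; ring
  -- determinant of Bm
  have himg : (univ : Finset (Vt k n)).image Sigma.fst = univ := by
    ext i
    simp only [mem_image, mem_univ, iff_true]
    exact ⟨⟨i, ⟨0, hn i⟩⟩, trivial, rfl⟩
  have hdetblock : ∀ i : Fin k,
      ((blockDiagonal' (fun i => (x+1) • (1 : Matrix (Fin (n i)) (Fin (n i)) ℝ) - 2 • (Matrix.of fun _ _ => (1:ℝ)))).toSquareBlock Sigma.fst i).det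
        = (x+1)^(n i - 1) * (x+1-2*(n i : ℝ)) := by
    intro i
    let e : Fin (n i) ≃ {p : Vt k n // p.1 = i} :=
      { toFun := fun a => ⟨⟨i, a⟩, rfl⟩
        invFun := fun p => p.prop ▸ p.val.2
        left_inv := fun a => rfl
        right_inv := fun p => by
          rcases p with ⟨⟨j, b⟩, hp⟩
          subst hp; rfl }
    rw [← Matrix.det_submatrix_equiv_self e]
    have : ((blockDiagonal' (fun i => (x+1) • (1 : Matrix (Fin (n i)) (Fin (n i)) ℝ) - 2 • (Matrix.of fun _ _ => (1:ℝ)))).toSquareBlock Sigma.fst i).submatrix e e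
        = (x+1) • (1 : Matrix (Fin (n i)) (Fin (n i)) ℝ) - 2 • (Matrix.of fun _ _ => (1:ℝ)) := by
      ext a b
      simp [Matrix.toSquareBlock_def, e, blockDiagonal'_apply_eq]
    rw [this, my_block_det (n i) (hn i) x hx]
  have hdetBm : Bm.det = (x+1)^((∑ i, n i) - k) * ∏ i, (x+1-2*(n i : ℝ)) := by
    rw [hBm, (blockTriangular_blockDiagonal' _).det, himg]
    rw [Finset.prod_congr rfl (fun i _ => hdetblock i)]
    rw [Finset.prod_mul_distrib, Finset.prod_pow_eq_pow_sum]
    congr 2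
    have : ∑ i, (n i - 1) + ∑ i : Fin k, 1 = ∑ i, n i := by
      rw [← Finset.sum_add_distrib]
      exact Finset.sum_congr rfl fun i _ => Nat.succ_pred_eq_of_pos (hn i)
    rw [Finset.sum_const, card_univ, Fintype.card_fin, smul_eq_mul, mul_one] at this
    omega
  have hunit : IsUnit Bm.det := by
    rw [isUnit_iff_ne_zero, hdetBm]
    exact mul_ne_zero (pow_ne_zero _ hx) (Finset.prod_ne_zero_iff.mpr fun i _ => hx2 i)
  set w : Vt k n → ℝ := fun p => (x + 1 - 2 * (n p.1 : ℝ))⁻¹ with hwdef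
  have hw : Bm *ᵥ w = fun _ => (1:ℝ) := by
    funext ⟨i, a⟩
    show ∑ q : Vt k n, Bm ⟨i, a⟩ q * w q = 1
    rw [← Finset.univ_sigma_univ, Finset.sum_sigma]
    rw [Finset.sum_eq_single_of_mem i (mem_univ i)]
    · have : ∀ b : Fin (n i), Bm ⟨i,a⟩ ⟨i,b⟩ * w ⟨i,b⟩
          = ((x+1) * (if a = b then 1 else 0) - 2) * (x + 1 - 2 * (n i : ℝ))⁻¹ := by
        intro b
        rw [hBm, blockDiagonal'_apply_eq]
        simp [Matrix.one_apply, w]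
      rw [Finset.sum_congr rfl (fun b _ => this b)]
      rw [← Finset.sum_mul]
      rw [Finset.sum_sub_distrib, ← Finset.mul_sum, Finset.sum_ite_eq]
      simp only [mem_univ, if_true, mul_one, Finset.sum_const, card_univ, Fintype.card_fin,
        nsmul_eq_mul, mul_one]
      rw [show (x+1) - (n i : ℝ) * 2 = x + 1 - 2 * (n i : ℝ) by ring]
      exact mul_inv_cancel₀ (hx2 i)
    · intro j _ hj
      apply Finset.sum_eq_zero
      intro b _
      rw [hBm, blockDiagonal'_apply_ne _ _ _ (Ne.symm hj), zero_mul]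
  have hinv : Bm⁻¹ *ᵥ (fun _ => (1:ℝ)) = w := by
    calc Bm⁻¹ *ᵥ (fun _ => (1:ℝ)) = Bm⁻¹ *ᵥ (Bm *ᵥ w) := by rw [hw]
    _ = (Bm⁻¹ * Bm) *ᵥ w := mulVec_mulVec _ _ _
    _ = w := by rw [Matrix.nonsing_inv_mul _ hunit, one_mulVec]
  rw [key, det_add_replicateCol_mul_replicateRow hunit]
  have : ((1 : Matrix Unit Unit ℝ) + replicateRow Unit (fun _ : Vt k n => (1:ℝ)) * Bm⁻¹ * replicateCol Unit (fun _ : Vt k n => (1:ℝ))).det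
      = 1 + ∑ i, (n i : ℝ) * (x + 1 - 2 * (n i : ℝ))⁻¹ := by
    rw [det_unique, Matrix.add_apply, Matrix.one_apply_eq, Matrix.mul_assoc,
      ← replicateCol_mulVec, hinv, replicateRow_mul_replicateCol_apply]
    congr 1
    show ∑ p : Vt k n, 1 * w p = _
    simp only [one_mul]
    rw [← Finset.univ_sigma_univ, Finset.sum_sigma]
    apply Finset.sum_congr rfl
    intro i _
    simp [w, mul_comm]
  rw [this, hdetBm]
  have : ∀ i : Fin k, (n i : ℝ) / (x + 1 - 2 * (n i : ℝ)) = (n i : ℝ) * (x + 1 - 2 * (n i : ℝ))⁻¹ :=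
    fun i => div_eq_mul_inv _ _
  rw [Finset.sum_congr rfl (fun i _ => this i)]
  ring
end

lemma my_eval_charpoly {m : Type*} [Fintype m] [DecidableEq m] (M : Matrix m m ℝ) (x : ℝ) :
    (M.charpoly).eval x = (x • (1 : Matrix m m ℝ) - M).det := by
  rw [Matrix.charpoly, ← Polynomial.coe_evalRingHom, RingHom.map_det]
  congr 1
  ext i j
  by_cases h : i = j
  · subst h
    simp [charmatrix_apply_eq, Matrix.one_apply_eq]
  · simp [charmatrix_apply_ne _ _ _ h, Matrix.one_apply_ne h]

section
variable (k : ℕ) (n : Fin k → ℕ)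

noncomputable def qpoly : ℝ[X] :=
  (∏ i, (X - C ((2*(n i):ℝ) - 1))) +
    ∑ j, C ((n j : ℝ)) * ∏ i ∈ univ.erase j, (X - C ((2*(n i):ℝ) - 1))

lemma qpoly_eval (x : ℝ) (hx2 : ∀ i, x + 1 - 2 * (n i : ℝ) ≠ 0) :
    (qpoly k n).eval x =
      (∏ i, (x+1-2*(n i : ℝ))) * (1 + ∑ i, (n i : ℝ)/(x+1-2*(n i : ℝ))) := by
  have he : ∀ (s : Finset (Fin k)), (∏ i ∈ s, (X - C ((2*(n i):ℝ) - 1))).eval x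
      = ∏ i ∈ s, (x + 1 - 2*(n i : ℝ)) := by
    intro s
    rw [Polynomial.eval_prod]
    exact Finset.prod_congr rfl fun i _ => by simp; ring
  rw [qpoly, Polynomial.eval_add, he, Polynomial.eval_finset_sum]
  rw [mul_add, mul_one, mul_sum]
  congr 1
  apply Finset.sum_congr rfl
  intro j _
  rw [Polynomial.eval_mul, Polynomial.eval_C, he]
  rw [← Finset.mul_prod_erase univ _ (mem_univ j)]
  rw [div_eq_mul_inv]
  rw [show ((x + 1 - 2 * ((n j):ℝ)) * ∏ i ∈ univ.erase j, (x + 1 - 2 * ((n i):ℝ))) * ((n j : ℝ) * (x + 1 - 2 * ((n j):ℝ))⁻¹)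
      = ((x + 1 - 2 * ((n j):ℝ)) * (x + 1 - 2 * ((n j):ℝ))⁻¹) * ((∏ i ∈ univ.erase j, (x + 1 - 2 * ((n i):ℝ))) * (n j : ℝ)) from by ring]
  rw [mul_inv_cancel₀ (hx2 j), one_mul, mul_comm]
end

section
variable (k : ℕ) (n : Fin k → ℕ)

lemma qpoly_monic (hk : 0 < k) : (qpoly k n).Monic ∧ (qpoly k n).natDegree = k := by
  have hP : (∏ i, (X - C ((2*(n i):ℝ) - 1))).Monic :=
    monic_prod_of_monic _ _ fun i _ => monic_X_sub_C _
  have hPdeg : (∏ i, (X - C ((2*(n i):ℝ) - 1))).natDegree = k := by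
    rw [Polynomial.natDegree_prod _ _ fun i _ => X_sub_C_ne_zero _]
    simp only [Polynomial.natDegree_X_sub_C]
    simp
  have hlt : (∑ j, C ((n j : ℝ)) * ∏ i ∈ univ.erase j, (X - C ((2*(n i):ℝ) - 1))).degree
      < (∏ i, (X - C ((2*(n i):ℝ) - 1))).degree := by
    apply lt_of_le_of_lt (Polynomial.degree_sum_le _ _)
    rw [Finset.sup_lt_iff]
    · intro j _
      apply lt_of_le_of_lt (Polynomial.degree_mul_le _ _)
      have h1 : (C ((n j : ℝ))).degree ≤ 0 := Polynomial.degree_C_le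
      have h2 : (∏ i ∈ univ.erase j, (X - C ((2*(n i):ℝ) - 1))).degree = ((k - 1 : ℕ) : WithBot ℕ) := by
        rw [Polynomial.degree_prod]
        simp only [Polynomial.degree_X_sub_C]
        rw [Finset.sum_const, Finset.card_erase_of_mem (mem_univ j), card_univ, Fintype.card_fin]
        simp
      have h3 : (∏ i, (X - C ((2*(n i):ℝ) - 1))).degree = ((k : ℕ) : WithBot ℕ) := by
        rw [Polynomial.degree_prod]
        simp only [Polynomial.degree_X_sub_C]
        simp
      rw [h3]
      calc (C ((n j:ℝ))).degree + (∏ i ∈ univ.erase j, (X - C ((2*(n i):ℝ) - 1))).degree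
          ≤ 0 + (k - 1 : ℕ) := by rw [h2]; exact add_le_add_left h1 _
        _ = ((k - 1 : ℕ) : WithBot ℕ) := zero_add _
        _ < (k : ℕ) := by
            rw [Nat.cast_lt]
            omega
    · rw [Polynomial.degree_prod]
      simp only [Polynomial.degree_X_sub_C]
      simp only [Finset.sum_const, card_univ, Fintype.card_fin, nsmul_eq_mul, mul_one]
      exact_mod_cast WithBot.bot_lt_coe _
  constructor
  · exact hP.add_of_left hlt
  · rw [qpoly, Polynomial.natDegree_add_eq_left_of_degree_lt hlt, hPdeg]
end

section
variable (k : ℕ) (n : Fin k → ℕ)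

open scoped Classical in
lemma my_charpoly_eq (hn : ∀ i, 1 ≤ n i) :
    (seidelMatrix (completeMultipartiteGraph fun i => Fin (n i))).charpoly
      = (X + C 1)^((∑ i, n i) - k) * qpoly k n := by
  have hfin : ({-1} ∪ Set.range (fun i : Fin k => 2*((n i):ℝ) - 1)).Finite :=
    (Set.finite_singleton _).union (Set.finite_range _)
  have key : ∀ x : ℝ, x ∉ ({-1} ∪ Set.range (fun i : Fin k => 2*((n i):ℝ) - 1)) →
      ((seidelMatrix (completeMultipartiteGraph fun i => Fin (n i))).charpoly
        - (X + C 1)^((∑ i, n i) - k) * qpoly k n).IsRoot x := by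
    intro x hx
    simp only [Set.mem_union, Set.mem_singleton_iff, Set.mem_range] at hx
    push_neg at hx
    obtain ⟨hx1, hx2⟩ := hx
    have hx1' : x + 1 ≠ 0 := fun h => hx1 (by linarith)
    have hx2' : ∀ i, x + 1 - 2 * ((n i):ℝ) ≠ 0 := fun i h => hx2 i (by linarith)
    simp only [Polynomial.IsRoot, Polynomial.eval_sub, Polynomial.eval_mul,
      Polynomial.eval_pow, Polynomial.eval_add, Polynomial.eval_C, Polynomial.eval_X]
    rw [my_eval_charpoly, my_det_eval k n hn x hx1' hx2', qpoly_eval k n x hx2']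
    ring
  have h0 : (seidelMatrix (completeMultipartiteGraph fun i => Fin (n i))).charpoly
      - (X + C 1)^((∑ i, n i) - k) * qpoly k n = 0 := by
    apply Polynomial.eq_zero_of_infinite_isRoot
    exact hfin.infinite_compl.mono (fun x hx => key x hx)
  exact sub_eq_zero.mp h0
end

section
variable (k : ℕ) (n : Fin k → ℕ)

lemma hc_neg (hn : ∀ i, 1 ≤ n i) (x : ℝ) (hx : x < 0) (i : Fin k) :
    x + 1 - 2*((n i):ℝ) < 0 := by
  have : (1:ℝ) ≤ (n i : ℝ) := by exact_mod_cast hn i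
  nlinarith

lemma qpoly_no_root_Ico (hn : ∀ i, 1 ≤ n i) (hk : 2 < k) (x : ℝ)
    (h1 : -1 ≤ x) (h2 : x < 0) : (qpoly k n).eval x ≠ 0 := by
  have hc := hc_neg k n hn x h2
  rw [qpoly_eval k n x (fun i => (hc i).ne)]
  apply mul_ne_zero
  · exact Finset.prod_ne_zero_iff.mpr fun i _ => (hc i).ne
  · have hterm : ∀ i : Fin k, (n i : ℝ)/(x+1-2*(n i : ℝ)) ≤ -(1/2) := by
      intro i
      rw [div_le_iff_of_neg (hc i)]
      have : (1:ℝ) ≤ (n i : ℝ) := by exact_mod_cast hn i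
      nlinarith
    have hsum : ∑ i, (n i : ℝ)/(x+1-2*(n i : ℝ)) ≤ ∑ i : Fin k, (-(1/2) : ℝ) :=
      Finset.sum_le_sum fun i _ => hterm i
    rw [Finset.sum_const, card_univ, Fintype.card_fin] at hsum
    have hk3 : (3:ℝ) ≤ k := by exact_mod_cast hk
    intro habs
    simp only [nsmul_eq_mul] at hsum
    nlinarith [habs]

lemma f_inj (hn : ∀ i, 1 ≤ n i) (hk : 0 < k) {x y : ℝ} (hx : x < 0) (hy : y < 0)
    (hxy : x < y) :
    ∑ i, (n i : ℝ)/(y+1-2*(n i : ℝ)) < ∑ i, (n i : ℝ)/(x+1-2*(n i : ℝ)) := by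
  have hcx := hc_neg k n hn x hx
  have hcy := hc_neg k n hn y hy
  apply Finset.sum_lt_sum_of_nonempty (univ_nonempty_iff.mpr ⟨⟨0, hk⟩⟩)
  intro i _
  have hni : (0:ℝ) < (n i : ℝ) := Nat.cast_pos.mpr (hn i)
  have hprod : (0:ℝ) < (x+1-2*(n i : ℝ)) * (y+1-2*(n i : ℝ)) :=
    mul_pos_of_neg_of_neg (hcx i) (hcy i)
  rw [← sub_pos, div_sub_div _ _ (hcx i).ne (hcy i).ne]
  apply div_pos _ hprod
  nlinarith

-- roots of qpoly that are < 0 are simple: the derivative doesn't vanish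
lemma qpoly_deriv_ne (hn : ∀ i, 1 ≤ n i) (hk : 0 < k) {x0 : ℝ} (hx0 : x0 < 0)
    (hroot : (qpoly k n).eval x0 = 0) :
    (qpoly k n).derivative.eval x0 ≠ 0 := by
  have hc := hc_neg k n hn x0 hx0
  set P : ℝ[X] := ∏ i, (X - C ((2*(n i):ℝ) - 1)) with hP
  have hPeval : ∀ y : ℝ, P.eval y = ∏ i, (y+1-2*(n i : ℝ)) := by
    intro y
    rw [hP, Polynomial.eval_prod]
    exact Finset.prod_congr rfl fun i _ => by simp; ring
  set f : ℝ → ℝ := fun y => 1 + ∑ i, (n i : ℝ)/(y+1-2*(n i : ℝ)) with hf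
  have hf0 : f x0 = 0 := by
    have := hroot
    rw [qpoly_eval k n x0 (fun i => (hc i).ne)] at this
    rcases mul_eq_zero.mp this with h | h
    · exact absurd h (Finset.prod_ne_zero_iff.mpr fun i _ => (hc i).ne)
    · exact h
  -- derivative of f at x0
  have hfder : HasDerivAt f (∑ i, (n i : ℝ) * (-(1 / (x0+1-2*(n i : ℝ))^2))) x0 := by
    rw [hf]
    have : ∀ i ∈ (univ : Finset (Fin k)), HasDerivAt (fun y => (n i : ℝ)/(y+1-2*(n i : ℝ)))
        ((n i : ℝ) * (-(1 / (x0+1-2*(n i : ℝ))^2))) x0 := by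
      intro i _
      have h1 : HasDerivAt (fun y : ℝ => y+1-2*(n i : ℝ)) 1 x0 := by
        exact ((hasDerivAt_id' x0).add_const 1).sub_const _
      have h2 : HasDerivAt (fun y : ℝ => (y+1-2*(n i : ℝ))⁻¹)
          (-(1 / (x0+1-2*(n i : ℝ))^2)) x0 := by
        have h := h1.inv (hc i).ne
        rw [← neg_div]
        exact h
      simpa [div_eq_mul_inv] using h2.const_mul ((n i : ℝ))
    simpa using (HasDerivAt.sum this).const_add 1
  have hPder := P.hasDerivAt x0
  have hmul : HasDerivAt (fun y => P.eval y * f y)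
      (P.derivative.eval x0 * f x0 + P.eval x0 * (∑ i, (n i : ℝ) * (-(1 / (x0+1-2*(n i : ℝ))^2)))) x0 :=
    hPder.mul hfder
  have heq : (fun y => (qpoly k n).eval y) =ᶠ[nhds x0] (fun y => P.eval y * f y) := by
    apply Filter.eventuallyEq_of_mem (Iio_mem_nhds hx0)
    intro y hy
    have hcy := hc_neg k n hn y hy
    show (qpoly k n).eval y = P.eval y * f y
    rw [qpoly_eval k n y (fun i => (hcy i).ne), hPeval]
  have hq : HasDerivAt (fun y => (qpoly k n).eval y)
      (P.derivative.eval x0 * f x0 + P.eval x0 * (∑ i, (n i : ℝ) * (-(1 / (x0+1-2*(n i : ℝ))^2)))) x0 :=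
    hmul.congr_of_eventuallyEq heq
  have huniq := ((qpoly k n).hasDerivAt x0).unique hq
  rw [huniq, hf0, mul_zero, zero_add]
  apply mul_ne_zero
  · rw [hPeval]; exact Finset.prod_ne_zero_iff.mpr fun i _ => (hc i).ne
  · apply ne_of_lt
    apply Finset.sum_neg
    · intro i _
      have hni : (0:ℝ) < (n i : ℝ) := Nat.cast_pos.mpr (hn i)
      have hsq : (0:ℝ) < (x0+1-2*(n i : ℝ))^2 := by
        nlinarith [hc i]
      have h4 : (0:ℝ) < 1 / (x0+1-2*(n i : ℝ))^2 := by positivity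
      nlinarith
    · exact univ_nonempty_iff.mpr ⟨⟨0, hk⟩⟩

lemma qpoly_eval_neg_one (hk : 0 < k) (hn : ∀ i, 1 ≤ n i) :
    (qpoly k n).eval (-1) = (-1)^(k-1) * ((k:ℝ)/2 - 1) * ∏ i, (2*((n i):ℝ)) := by
  have he : ∀ (s : Finset (Fin k)), (∏ i ∈ s, (X - C ((2*(n i):ℝ) - 1))).eval (-1)
      = (-1)^(s.card) * ∏ i ∈ s, (2*((n i):ℝ)) := by
    intro s
    rw [Polynomial.eval_prod]
    rw [show ∏ j ∈ s, Polynomial.eval (-1) (X - C ((2*(n j):ℝ) - 1))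
        = ∏ j ∈ s, ((-1) * (2*((n j):ℝ))) from
      Finset.prod_congr rfl fun i _ => by simp; ring]
    rw [Finset.prod_mul_distrib, Finset.prod_const]
  have herase : ∀ j : Fin k, (n j : ℝ) * ∏ i ∈ univ.erase j, (2*((n i):ℝ))
      = (∏ i, (2*((n i):ℝ)))/2 := by
    intro j
    rw [← Finset.mul_prod_erase univ (fun i => (2*((n i):ℝ))) (mem_univ j)]
    ring
  rw [qpoly, Polynomial.eval_add, Polynomial.eval_finset_sum, he]
  rw [show ∑ j, Polynomial.eval (-1) (C ((n j : ℝ)) *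
      ∏ i ∈ univ.erase j, (X - C ((2*(n i):ℝ) - 1)))
      = ∑ j : Fin k, ((-1:ℝ))^(k-1) * ((∏ i, (2*((n i):ℝ)))/2) from
    Finset.sum_congr rfl fun j _ => by
      rw [Polynomial.eval_mul, Polynomial.eval_C, he, Finset.card_erase_of_mem (mem_univ j),
        card_univ, Fintype.card_fin, ← mul_assoc, mul_comm ((n j:ℝ)) _, mul_assoc, herase j]]
  have hks : (-1:ℝ)^k = (-1)^(k-1) * (-1) := by
    conv_lhs => rw [show k = (k-1)+1 by omega]
    rw [pow_succ]
  rw [Finset.sum_const, card_univ, Fintype.card_fin, hks]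
  simp only [nsmul_eq_mul]
  ring
end


open scoped Classical in
/-- **Remark.** If `2 < k < n = ∑ i, n i`, then the complete `k`-partite graph
`K_{n_1,…,n_k}` has exactly two distinct negative Seidel eigenvalues: `-1` with
multiplicity exactly `n - k`, and one further simple eigenvalue `μ < -1`
(the multiset of negative eigenvalues is `(n - k) • {-1} + {μ}`). -/
theorem negative_seidel_eigenvalues (k : ℕ) (n : Fin k → ℕ) (hn : ∀ i, 1 ≤ n i)
    (hk : 2 < k) (hkn : k < ∑ i, n i)
    (hS : (seidelMatrix (completeMultipartiteGraph fun i => Fin (n i))).IsHermitian) :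
    ∃ μ : ℝ, μ < -1 ∧
      Multiset.filter (fun x => x < 0) (Finset.univ.val.map hS.eigenvalues) =
        Multiset.replicate ((∑ i, n i) - k) (-1) + {μ} := by
  classical
  have hk0 : 0 < k := by omega
  obtain ⟨hqm, hqd⟩ := qpoly_monic k n hk0
  have hq0 : qpoly k n ≠ 0 := hqm.ne_zero
  set S := seidelMatrix (completeMultipartiteGraph fun i => Fin (n i)) with hSdef
  have hchar1 : S.charpoly = ∏ i, (X - C (hS.eigenvalues i)) := my_charpoly_hermitian _ hS
  have hchar2 : S.charpoly = (X + C 1)^((∑ i, n i) - k) * qpoly k n := my_charpoly_eq k n hn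
  have hcharne : S.charpoly ≠ 0 := by
    rw [hchar1]
    exact (monic_prod_of_monic _ _ fun i _ => monic_X_sub_C _).ne_zero
  have hM : S.charpoly.roots = Multiset.map hS.eigenvalues Finset.univ.val := by
    rw [hchar1]
    have h1 : (∏ i, (X - C (hS.eigenvalues i)))
        = ((Finset.univ.val.map hS.eigenvalues).map (fun a => X - C a)).prod := by
      rw [Multiset.map_map]; rfl
    rw [h1, Polynomial.roots_multiset_prod_X_sub_C]
  have hsplits' : (qpoly k n).Splits := by
    refine Polynomial.Splits.of_dvd ?_ hcharne ?_
    · rw [hchar1]; exact Polynomial.Splits.prod (f := fun i => X - C (hS.eigenvalues i)) fun i _ => Polynomial.Splits.X_sub_C _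
    · exact ⟨(X + C 1)^((∑ i, n i) - k), by rw [hchar2]; ring⟩
  have hcard : (qpoly k n).roots.card = k := by
    have h := Polynomial.splits_iff_card_roots.mp hsplits'
    rw [hqd] at h
    exact h
  have hprodrep := Polynomial.Splits.eq_prod_roots_of_monic hsplits' hqm
  have hroots2 : S.charpoly.roots = Multiset.replicate ((∑ i, n i) - k) (-1) + (qpoly k n).roots := by
    rw [hchar2, Polynomial.roots_mul (by rw [← hchar2]; exact hcharne), Polynomial.roots_pow]
    congr 1
    rw [show (X + C 1 : ℝ[X]) = X - C (-1) by rw [map_neg, sub_neg_eq_add],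
      Polynomial.roots_X_sub_C, Multiset.nsmul_singleton]
  have hA : ∀ y ∈ (qpoly k n).roots, y < 0 → y < -1 := by
    intro y hy hyneg
    by_contra h
    push_neg at h
    exact qpoly_no_root_Ico k n hn hk y h hyneg (Polynomial.isRoot_of_mem_roots hy)
  set r := Multiset.filter (fun x => x < 0) (qpoly k n).roots with hr
  have hmemr : ∀ y ∈ r, y ∈ (qpoly k n).roots ∧ y < 0 := fun y hy => Multiset.mem_filter.mp hy
  have hfzero : ∀ y ∈ r, ∑ i, (n i : ℝ)/(y+1-2*(n i : ℝ)) = -1 := by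
    intro y hy
    obtain ⟨hy1, hy2⟩ := hmemr y hy
    have hc := hc_neg k n hn y hy2
    have := Polynomial.isRoot_of_mem_roots hy1
    rw [Polynomial.IsRoot, qpoly_eval k n y (fun i => (hc i).ne)] at this
    rcases mul_eq_zero.mp this with h | h
    · exact absurd h (Finset.prod_ne_zero_iff.mpr fun i _ => (hc i).ne)
    · linarith
  have hcard_le : r.card ≤ 1 := by
    by_contra hgt
    push_neg at hgt
    have h2 : 2 ≤ r.card := hgt
    have h2' : 0 < r.card := by omega
    obtain ⟨a, ha⟩ := Multiset.card_pos_iff_exists_mem.mp h2'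
    obtain ⟨s, hs⟩ := Multiset.exists_cons_of_mem ha
    have hscard : 0 < s.card := by
      have := congrArg Multiset.card hs
      rw [Multiset.card_cons] at this
      omega
    obtain ⟨b, hb⟩ := Multiset.card_pos_iff_exists_mem.mp hscard
    have hbr : b ∈ r := by rw [hs]; exact Multiset.mem_cons_of_mem hb
    obtain ⟨ha1, ha2⟩ := hmemr a ha
    obtain ⟨hb1, hb2⟩ := hmemr b hbr
    by_cases hab : a = b
    · -- double root
      subst hab
      obtain ⟨t, ht⟩ := Multiset.exists_cons_of_mem hb
      have hsplit_roots : (qpoly k n).roots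
          = a ::ₘ a ::ₘ (t + Multiset.filter (fun x => ¬ x < 0) (qpoly k n).roots) := by
        conv_lhs => rw [← Multiset.filter_add_not (fun x => x < 0) (qpoly k n).roots]
        rw [← hr, hs, ht, Multiset.cons_add, Multiset.cons_add]
      have hg : qpoly k n = (X - C a)^2 *
          ((t + Multiset.filter (fun x => ¬ x < 0) (qpoly k n).roots).map (fun y => X - C y)).prod := by
        conv_lhs => rw [hprodrep, hsplit_roots]
        rw [Multiset.map_cons, Multiset.map_cons, Multiset.prod_cons, Multiset.prod_cons,
          ← mul_assoc, ← sq]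
      have : (qpoly k n).derivative.eval a = 0 := by
        rw [hg]
        simp [Polynomial.derivative_mul, Polynomial.derivative_pow]
      exact qpoly_deriv_ne k n hn hk0 ha2 (Polynomial.isRoot_of_mem_roots ha1) this
    · rcases lt_or_gt_of_ne hab with h | h
      · have := f_inj k n hn hk0 ha2 hb2 h
        rw [hfzero a ha, hfzero b hbr] at this
        exact lt_irrefl _ this
      · have := f_inj k n hn hk0 hb2 ha2 h
        rw [hfzero a ha, hfzero b hbr] at this
        exact lt_irrefl _ this
  have hrne : r ≠ 0 := by
    intro hr0
    have hnonneg : ∀ y ∈ (qpoly k n).roots, (0:ℝ) ≤ y := by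
      intro y hy
      by_contra h
      push_neg at h
      have : y ∈ r := Multiset.mem_filter.mpr ⟨hy, h⟩
      rw [hr0] at this
      exact absurd this (Multiset.notMem_zero y)
    have heval : (qpoly k n).eval (-1)
        = (-1)^k * ((qpoly k n).roots.map (fun a => 1 + a)).prod := by
      conv_lhs => rw [hprodrep]
      rw [Polynomial.eval_multiset_prod, Multiset.map_map]
      simp only [Function.comp_def]
      have : ((qpoly k n).roots.map (fun a => Polynomial.eval (-1) (X - C a)))
          = ((qpoly k n).roots.map (fun a => 1 + a)).map Neg.neg := by
        rw [Multiset.map_map]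
        apply Multiset.map_congr rfl
        intro a _
        simp
        ring
      rw [this, Multiset.prod_map_neg, Multiset.card_map, hcard]
    have hpos1 : (0:ℝ) < ((qpoly k n).roots.map (fun a => 1 + a)).prod := by
      apply Multiset.prod_pos
      intro z hz
      obtain ⟨a, ha, rfl⟩ := Multiset.mem_map.mp hz
      have := hnonneg a ha
      linarith
    have heval2 := qpoly_eval_neg_one k n hk0 hn
    have hT : (0:ℝ) < ∏ i, (2*((n i):ℝ)) := by
      apply Finset.prod_pos
      intro i _
      have : (0:ℝ) < (n i : ℝ) := Nat.cast_pos.mpr (hn i)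
      linarith
    have hk3 : (3:ℝ) ≤ (k:ℝ) := by exact_mod_cast hk
    rcases Nat.even_or_odd k with hpar | hpar
    · have h1 : ((-1:ℝ))^k = 1 := hpar.neg_one_pow
      have h2 : ((-1:ℝ))^(k-1) = -1 := by
        have : Odd (k-1) := by
          rcases hpar with ⟨m, hm⟩
          exact ⟨m-1, by omega⟩
        exact this.neg_one_pow
      rw [heval2, h1, h2] at heval
      nlinarith
    · have h1 : ((-1:ℝ))^k = -1 := hpar.neg_one_pow
      have h2 : ((-1:ℝ))^(k-1) = 1 := by
        have : Even (k-1) := by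
          rcases hpar with ⟨m, hm⟩
          exact ⟨m, by omega⟩
        exact this.neg_one_pow
      rw [heval2, h1, h2] at heval
      nlinarith
  have hcard1 : r.card = 1 := by
    have : 0 < r.card := Multiset.card_pos.mpr hrne
    omega
  obtain ⟨μ, hμ⟩ := Multiset.card_eq_one.mp hcard1
  have hμr : μ ∈ r := by rw [hμ]; exact Multiset.mem_singleton_self μ
  obtain ⟨hμ1, hμ2⟩ := hmemr μ hμr
  refine ⟨μ, hA μ hμ1 hμ2, ?_⟩
  have hfilt : Multiset.filter (fun x => x < 0) (Finset.univ.val.map hS.eigenvalues)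
      = Multiset.filter (fun x => x < 0) (Multiset.replicate ((∑ i, n i) - k) (-1) + (qpoly k n).roots) := by
    rw [← hM, ← hroots2]
  have h1 : Multiset.filter (fun x => x < 0) (Multiset.replicate ((∑ i, n i) - k) (-1:ℝ))
      = Multiset.replicate ((∑ i, n i) - k) (-1:ℝ) :=
    Multiset.filter_eq_self.mpr (fun a ha => by rw [Multiset.eq_of_mem_replicate ha]; norm_num)
  rw [hfilt, Multiset.filter_add, h1, ← hr, hμ]
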